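/- Let ε₁, ε₂ > 0 and let b, r ∈ ℝ satisfy b ≥ 0, r > 0 and D := 1 − ε₁ r − ε₂ b > 0. Let d ≥ 1 and p, q ∈ ℝᵈ, and set w = ((1 − ε₂ b)/D²)·((1 − ε₂ b)·p/r + ε₂ q). Then the exact identity r·D·w − (ε₁² r²/D)·p − (ε₁ ε₂ r²/D)·q = (1 + ε₁ r − ε₂ b)·p + ε₂ r·q holds in ℝᵈ. -/

import Mathlib

/-- Exact asymptotic-gradient-flow decomposition (5.1) of the paper: with D = 1-ε₁r-ε₂b
and w the gradient of the entropy variable u₂ of the second pair, the exact flux of the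
Fokker–Planck equation equals m₂(r)w minus explicit second-order remainder terms. -/
theorem agf_decomposition_pair2
    (ε₁ ε₂ b r : ℝ) (hε₁ : 0 < ε₁) (hε₂ : 0 < ε₂) (hb : 0 ≤ b) (hr : 0 < r)
    (hD : 0 < 1 - ε₁ * r - ε₂ * b)
    (d : ℕ) (hd : 1 ≤ d) (p q : EuclideanSpace ℝ (Fin d)) :
    (r * (1 - ε₁ * r - ε₂ * b)) •
        (((1 - ε₂ * b) / (1 - ε₁ * r - ε₂ * b) ^ 2) •
          (((1 - ε₂ * b) / r) • p + ε₂ • q))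
      - (ε₁ ^ 2 * r ^ 2 / (1 - ε₁ * r - ε₂ * b)) • p
      - (ε₁ * ε₂ * r ^ 2 / (1 - ε₁ * r - ε₂ * b)) • q
    = (1 + ε₁ * r - ε₂ * b) • p + (ε₂ * r) • q := by
  have hDne : (1 - ε₁ * r - ε₂ * b) ≠ 0 := ne_of_gt hD
  have hrne : r ≠ 0 := ne_of_gt hr
  have hDne' : (1 - r * ε₁ - ε₂ * b) ≠ 0 := by rw [mul_comm r ε₁]; exact hDne
  match_scalars <;> field_simp <;> ring
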